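/- For σ ∈ (0,1) define r(σ) := (σ/π) ∫_{−√(−ln σ)}^{√(−ln σ)} (e^{−2x²} − σ²)^{−1/2} dx, and define F(t) := ∫_0^{√(−ln t)} √(e^{−2x²} − t²) dx. Then for every s ∈ (0,1), ∫_s^1 r(σ) dσ = (2/π) F(s). -/

import Mathlib

open MeasureTheory intervalIntegral

/-- The (real form of the) WKB eigenvalue density for the Gaussian potential:
`r(σ) = (σ/π) ∫_{−√(−ln σ)}^{√(−ln σ)} (e^{−2x²} − σ²)^{−1/2} dx`. -/
noncomputable def r (σ : ℝ) : ℝ :=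
  (σ / Real.pi) *
    ∫ x in (-(Real.sqrt (-Real.log σ)))..(Real.sqrt (-Real.log σ)),
      (Real.exp (-2 * x ^ 2) - σ ^ 2) ^ (-(1 : ℝ) / 2)

/-- The WKB quantization integral for the Gaussian potential `A₀(x) = e^{−x²}`. -/
noncomputable def F (t : ℝ) : ℝ :=
  ∫ x in (0 : ℝ)..(Real.sqrt (-Real.log t)), Real.sqrt (Real.exp (-2 * x ^ 2) - t ^ 2)

lemma expsq (x : ℝ) : Real.exp (-2 * x ^ 2) = (Real.exp (-x ^ 2)) ^ 2 := by
  rw [show (-2:ℝ) * x ^ 2 = -x ^ 2 + -x ^ 2 by ring, Real.exp_add]; ring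

/-- Integrability of `σ ↦ σ (c² − σ²)^{-1/2}` on `[s, c]`. -/
lemma aux_intint {s c : ℝ} (hs : 0 < s) (hsc : s < c) :
    IntervalIntegrable (fun σ => σ * (c ^ 2 - σ ^ 2) ^ (-(1 : ℝ) / 2)) volume s c := by
  have hbase : Measurable fun σ : ℝ => c ^ 2 - σ ^ 2 :=
    (continuous_const.sub (continuous_pow 2)).measurable
  have hmeas : AEStronglyMeasurable (fun σ : ℝ => σ * (c ^ 2 - σ ^ 2) ^ (-(1 : ℝ) / 2))
      (volume.restrict (Set.uIoc s c)) :=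
    (measurable_id.mul (hbase.pow_const _)).aestronglyMeasurable
  have h0 : IntervalIntegrable (fun t : ℝ => t ^ (-(1 : ℝ) / 2)) volume (c - s) (c - c) :=
    intervalIntegrable_rpow' (by norm_num)
  have h1 : IntervalIntegrable (fun σ : ℝ => (c - σ) ^ (-(1 : ℝ) / 2)) volume s c := by
    simpa using h0.comp_sub_left c
  refine ((h1.const_mul (c * s ^ (-(1 : ℝ) / 2))).mono_fun hmeas ?_)
  rw [Set.uIoc_of_le hsc.le]
  refine (ae_restrict_iff' measurableSet_Ioc).2 (ae_of_all _ fun σ hσ => ?_)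
  have hσ0 : 0 < σ := hs.trans hσ.1
  have hc0 : 0 < c := hs.trans hsc
  have ht : (0 : ℝ) ≤ c ^ 2 - σ ^ 2 := by nlinarith [hσ.2]
  have hcσ : (0 : ℝ) ≤ c - σ := by linarith [hσ.2]
  have hf0 : 0 ≤ σ * (c ^ 2 - σ ^ 2) ^ (-(1 : ℝ) / 2) :=
    mul_nonneg hσ0.le (Real.rpow_nonneg ht _)
  have hg0 : 0 ≤ c * s ^ (-(1 : ℝ) / 2) * (c - σ) ^ (-(1 : ℝ) / 2) :=
    mul_nonneg (mul_nonneg hc0.le (Real.rpow_nonneg hs.le _)) (Real.rpow_nonneg hcσ _)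
  show ‖σ * (c ^ 2 - σ ^ 2) ^ (-(1 : ℝ) / 2)‖ ≤ ‖c * s ^ (-(1 : ℝ) / 2) * (c - σ) ^ (-(1 : ℝ) / 2)‖
  rw [Real.norm_of_nonneg hf0, Real.norm_of_nonneg hg0]
  have key : (c ^ 2 - σ ^ 2) ^ (-(1 : ℝ) / 2) ≤ (s * (c - σ)) ^ (-(1 : ℝ) / 2) := by
    rcases eq_or_lt_of_le hσ.2 with h | h
    · rw [← h]
      simp [Real.zero_rpow (by norm_num : -(1 : ℝ) / 2 ≠ 0)]
    · have hpos : 0 < s * (c - σ) := mul_pos hs (by linarith)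
      exact Real.rpow_le_rpow_of_nonpos hpos (by nlinarith) (by norm_num)
  calc σ * (c ^ 2 - σ ^ 2) ^ (-(1 : ℝ) / 2)
      ≤ c * (s * (c - σ)) ^ (-(1 : ℝ) / 2) := by
        apply mul_le_mul (by linarith [hσ.2]) key (Real.rpow_nonneg ht _) hc0.le
    _ = c * s ^ (-(1 : ℝ) / 2) * (c - σ) ^ (-(1 : ℝ) / 2) := by
        rw [Real.mul_rpow hs.le hcσ, mul_assoc]

/-- The inner FTC computation. -/
lemma aux_ftc {s c : ℝ} (hs : 0 < s) (hsc : s < c) :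
    (∫ σ in s..c, σ * (c ^ 2 - σ ^ 2) ^ (-(1 : ℝ) / 2)) = Real.sqrt (c ^ 2 - s ^ 2) := by
  have hc0 : 0 < c := hs.trans hsc
  have hcont : ContinuousOn (fun σ : ℝ => -Real.sqrt (c ^ 2 - σ ^ 2)) (Set.Icc s c) :=
    (((continuous_const.sub (continuous_pow 2)).sqrt).neg).continuousOn
  have hderiv : ∀ σ ∈ Set.Ioo s c,
      HasDerivWithinAt (fun σ : ℝ => -Real.sqrt (c ^ 2 - σ ^ 2))
        (σ * (c ^ 2 - σ ^ 2) ^ (-(1 : ℝ) / 2)) (Set.Ioi σ) σ := by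
    intro σ hσ
    have hσ0 : 0 < σ := hs.trans hσ.1
    have ht : (0 : ℝ) < c ^ 2 - σ ^ 2 := by nlinarith [hσ.2]
    have hsq : 0 < Real.sqrt (c ^ 2 - σ ^ 2) := Real.sqrt_pos.2 ht
    have hd : HasDerivAt (fun y : ℝ => c ^ 2 - y ^ 2) (-(2 * σ ^ 1)) σ :=
      (hasDerivAt_pow 2 σ).const_sub (c ^ 2)
    have := (hd.sqrt ht.ne').neg
    refine this.hasDerivWithinAt.congr_deriv (Eq.symm ?_)
    rw [neg_div, Real.rpow_neg ht.le, ← Real.sqrt_eq_rpow]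
    field_simp
  have := intervalIntegral.integral_eq_sub_of_hasDeriv_right_of_le hsc.le hcont hderiv
    (aux_intint hs hsc)
  rw [this]
  simp [sub_self]

lemma strictslice {s x : ℝ} (hs0 : 0 < s) :
    s < Real.exp (-x ^ 2) ↔
      x ∈ Set.Ioo (-(Real.sqrt (-Real.log s))) (Real.sqrt (-Real.log s)) := by
  rw [Set.mem_Ioo, ← abs_lt, ← Real.log_lt_iff_lt_exp hs0, lt_neg, ← sq_abs x]
  exact (Real.lt_sqrt (abs_nonneg x)).symm

lemma weakslice {σ x : ℝ} (h0 : 0 < σ) (h1 : σ ≤ 1) :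
    σ ≤ Real.exp (-x ^ 2) ↔
      x ∈ Set.Icc (-(Real.sqrt (-Real.log σ))) (Real.sqrt (-Real.log σ)) := by
  rw [Set.mem_Icc, ← abs_le, ← Real.log_le_iff_le_exp h0, le_neg, ← sq_abs x]
  exact (Real.le_sqrt (abs_nonneg x) (neg_nonneg.2 (Real.log_nonpos h0.le h1))).symm

/-- For every `s ∈ (0,1)`, `∫_s^1 r(σ) dσ = (2/π) F(s)`. -/
theorem wkb_density_integral (s : ℝ) (hs : s ∈ Set.Ioo (0 : ℝ) 1) :
    ∫ σ in s..1, r σ = (2 / Real.pi) * F s := by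
  obtain ⟨hs0, hs1⟩ := hs
  set a : ℝ := Real.sqrt (-Real.log s) with ha
  -- the product function
  set K : ℝ × ℝ → ℝ := fun p =>
    Set.indicator {q : ℝ × ℝ | s < q.1 ∧ q.1 ≤ Real.exp (-q.2 ^ 2)}
      (fun q => q.1 * (Real.exp (-2 * q.2 ^ 2) - q.1 ^ 2) ^ (-(1 : ℝ) / 2)) p with hK
  have hS : MeasurableSet {q : ℝ × ℝ | s < q.1 ∧ q.1 ≤ Real.exp (-q.2 ^ 2)} := by
    have h1 : MeasurableSet {q : ℝ × ℝ | s < q.1} :=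
      measurableSet_lt measurable_const measurable_fst
    have h2 : MeasurableSet {q : ℝ × ℝ | q.1 ≤ Real.exp (-q.2 ^ 2)} :=
      measurableSet_le measurable_fst
        (Real.continuous_exp.comp (((continuous_pow 2).comp continuous_snd).neg)).measurable
    exact h1.inter h2
  have hKmeas : Measurable K := by
    apply Measurable.indicator _ hS
    have hc : Continuous fun q : ℝ × ℝ => Real.exp (-2 * q.2 ^ 2) - q.1 ^ 2 := by fun_prop
    exact measurable_fst.mul (hc.measurable.pow_const _)
  have hKnonneg : ∀ p, 0 ≤ K p := by
    intro p
    apply Set.indicator_nonneg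
    intro q hq
    have hq1 : 0 < q.1 := hs0.trans hq.1
    have : q.1 ^ 2 ≤ Real.exp (-2 * q.2 ^ 2) := by
      rw [expsq]; exact pow_le_pow_left₀ hq1.le hq.2 2
    exact mul_nonneg hq1.le (Real.rpow_nonneg (by linarith) _)
  -- σ-slices (for fixed x)
  have hsliceσ : ∀ x : ℝ, (fun σ => K (σ, x)) =
      Set.indicator (Set.Ioc s (Real.exp (-x ^ 2)))
        (fun σ => σ * ((Real.exp (-x ^ 2)) ^ 2 - σ ^ 2) ^ (-(1 : ℝ) / 2)) := by
    intro x
    funext σ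
    simp only [hK, Set.indicator_apply, Set.mem_setOf_eq, Set.mem_Ioc, expsq x]
  have hIntSlice : ∀ x : ℝ, Integrable (fun σ => K (σ, x)) volume := by
    intro x
    rw [hsliceσ x]
    by_cases h : s < Real.exp (-x ^ 2)
    · exact ((intervalIntegrable_iff_integrableOn_Ioc_of_le h.le).1
        (aux_intint hs0 h)).integrable_indicator measurableSet_Ioc
    · rw [Set.Ioc_eq_empty h]
      simp
  -- value of the σ-slice integrals
  set V : ℝ → ℝ := Set.indicator (Set.Ioo (-a) a)
    (fun x => Real.sqrt (Real.exp (-2 * x ^ 2) - s ^ 2)) with hV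
  have hValSlice : ∀ x : ℝ, (∫ σ, K (σ, x)) = V x := by
    intro x
    rw [hsliceσ x, MeasureTheory.integral_indicator measurableSet_Ioc]
    by_cases h : s < Real.exp (-x ^ 2)
    · rw [hV, Set.indicator_of_mem ((strictslice hs0).1 h),
        ← intervalIntegral.integral_of_le h.le, aux_ftc hs0 h, ← expsq]
    · rw [hV, Set.indicator_of_notMem (fun hmem => h ((strictslice hs0).2 hmem)),
        Set.Ioc_eq_empty h]
      simp
  have hVint : Integrable V volume := by
    have hVcont : Continuous fun x : ℝ => Real.sqrt (Real.exp (-2 * x ^ 2) - s ^ 2) := by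
      fun_prop
    exact ((hVcont.continuousOn.integrableOn_Icc).mono_set
      Set.Ioo_subset_Icc_self).integrable_indicator measurableSet_Ioo
  -- product integrability
  have hKint : Integrable K ((volume : Measure ℝ).prod volume) := by
    refine (integrable_prod_iff' hKmeas.aestronglyMeasurable).2 ⟨ae_of_all _ hIntSlice, ?_⟩
    have : (fun x : ℝ => ∫ σ, ‖K (σ, x)‖) = V := by
      funext x
      rw [show (fun σ => ‖K (σ, x)‖) = fun σ => K (σ, x) from
        funext fun σ => Real.norm_of_nonneg (hKnonneg _), hValSlice x]
    rw [this]
    exact hVint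
  -- x-slices (for fixed σ in (s,1])
  have hσside : ∀ σ ∈ Set.Ioc s 1, r σ = (1 / Real.pi) * ∫ x, K (σ, x) := by
    intro σ hσ
    have hσ0 : 0 < σ := hs0.trans hσ.1
    set X : ℝ := Real.sqrt (-Real.log σ) with hX
    have hXnn : 0 ≤ X := Real.sqrt_nonneg _
    have hxslice : (fun x => K (σ, x)) =
        Set.indicator (Set.Icc (-X) X)
          (fun x => σ * (Real.exp (-2 * x ^ 2) - σ ^ 2) ^ (-(1 : ℝ) / 2)) := by
      funext x
      simp only [hK, Set.indicator_apply, Set.mem_setOf_eq]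
      congr 1
      rw [eq_iff_iff]
      constructor
      · rintro ⟨-, h2⟩
        exact (weakslice hσ0 hσ.2).1 h2
      · intro h
        exact ⟨hσ.1, (weakslice hσ0 hσ.2).2 h⟩
    rw [hxslice, MeasureTheory.integral_indicator measurableSet_Icc,
      MeasureTheory.integral_Icc_eq_integral_Ioc,
      ← intervalIntegral.integral_of_le (neg_le_self hXnn),
      intervalIntegral.integral_const_mul]
    simp only [r]
    ring
  -- splitting the final symmetric integral
  have hsplit : (∫ x in (-a)..a, Real.sqrt (Real.exp (-2 * x ^ 2) - s ^ 2)) = 2 * F s := by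
    have hcont : Continuous fun x : ℝ => Real.sqrt (Real.exp (-2 * x ^ 2) - s ^ 2) := by
      fun_prop
    have hint : IntervalIntegrable (fun x : ℝ => Real.sqrt (Real.exp (-2 * x ^ 2) - s ^ 2))
        volume 0 a := hcont.intervalIntegrable _ _
    have hint2 : IntervalIntegrable (fun x : ℝ => Real.sqrt (Real.exp (-2 * x ^ 2) - s ^ 2))
        volume (-a) 0 := hcont.intervalIntegrable _ _
    have heq : (∫ x in (-a)..(0 : ℝ), Real.sqrt (Real.exp (-2 * x ^ 2) - s ^ 2))
        = ∫ x in (0 : ℝ)..a, Real.sqrt (Real.exp (-2 * x ^ 2) - s ^ 2) := by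
      have h := intervalIntegral.integral_comp_neg (a := (0 : ℝ)) (b := a)
        (fun x => Real.sqrt (Real.exp (-2 * x ^ 2) - s ^ 2))
      simp only [neg_zero] at h
      rw [← h]
      simp [neg_sq]
    rw [← intervalIntegral.integral_add_adjacent_intervals hint2 hint, heq, F]
    ring
  -- assembling everything
  calc ∫ σ in s..1, r σ
      = ∫ σ in Set.Ioc s 1, r σ := intervalIntegral.integral_of_le hs1.le
    _ = ∫ σ in Set.Ioc s 1, (1 / Real.pi) * ∫ x, K (σ, x) :=
        setIntegral_congr_fun measurableSet_Ioc fun σ hσ => hσside σ hσ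
    _ = (1 / Real.pi) * ∫ σ in Set.Ioc s 1, ∫ x, K (σ, x) :=
        MeasureTheory.integral_const_mul _ _
    _ = (1 / Real.pi) * ∫ σ, ∫ x, K (σ, x) := by
        congr 1
        rw [← MeasureTheory.integral_indicator measurableSet_Ioc]
        congr 1
        funext σ
        by_cases h : σ ∈ Set.Ioc s 1
        · rw [Set.indicator_of_mem h]
        · rw [Set.indicator_of_notMem h]
          have hz : ∀ x : ℝ, K (σ, x) = 0 := by
            intro x
            apply Set.indicator_of_notMem
            rintro ⟨h1, h2⟩
            exact h ⟨h1, h2.trans (Real.exp_le_one_iff.2 (neg_nonpos.2 (sq_nonneg x)))⟩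
          simp [hz]
    _ = (1 / Real.pi) * ∫ x, ∫ σ, K (σ, x) := by
        congr 1
        exact MeasureTheory.integral_integral_swap hKint
    _ = (1 / Real.pi) * ∫ x, V x := by
        congr 1
        exact MeasureTheory.integral_congr_ae (Filter.Eventually.of_forall hValSlice)
    _ = (1 / Real.pi) * ∫ x in Set.Ioo (-a) a,
          Real.sqrt (Real.exp (-2 * x ^ 2) - s ^ 2) := by
        rw [hV, MeasureTheory.integral_indicator measurableSet_Ioo]
    _ = (1 / Real.pi) * ∫ x in (-a)..a, Real.sqrt (Real.exp (-2 * x ^ 2) - s ^ 2) := by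
        rw [intervalIntegral.integral_of_le (neg_le_self (Real.sqrt_nonneg _)),
          MeasureTheory.integral_Ioc_eq_integral_Ioo]
    _ = (2 / Real.pi) * F s := by
        rw [hsplit]
        ring
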